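/- Let g_1, ..., g_{s+1} be functions and 0 ≤ k ≤ s an integer. For i with s-k+1 ≤ i ≤ s+1, set V_{s-k+1}(i) = W(g_1, ..., g_{s-k}, g_i), a Wronskian of order s-k+1. Then W(V_{s-k+1}(s-k+1), ..., V_{s-k+1}(s+1))(x) = W(g_1, ..., g_{s+1})(x) · ∏_{j=1}^k W(g_1, ..., g_{s-k})(x+jh). -/

import Mathlib

/-- Discrete Wronskian of `s` functions: `det (g_i (x + (j-1) h))`. -/
noncomputable def DW (h : ℂ) {s : ℕ} (g : Fin s → ℂ → ℂ) (x : ℂ) : ℂ :=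
  Matrix.det (Matrix.of fun i j : Fin s => g i (x + (j : ℕ) * h))

/-- The first `s - k` of the functions `g_1, ..., g_{s+1}`. -/
def firstTup (s k : ℕ) (hk : k ≤ s) (g : Fin (s + 1) → ℂ → ℂ) :
    Fin (s - k) → ℂ → ℂ :=
  fun j => g (Fin.castLE (by omega) j)


noncomputable def Wn (h : ℂ) (n : ℕ) (G : ℕ → ℂ → ℂ) (x : ℂ) : ℂ :=
  Matrix.det (Matrix.of fun i j : Fin n => G i (x + (j : ℕ) * h))

lemma Wn_congr (h : ℂ) (n : ℕ) {G G' : ℕ → ℂ → ℂ} (x : ℂ)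
    (hG : ∀ a < n, ∀ y, G a y = G' a y) : Wn h n G x = Wn h n G' x := by
  unfold Wn; congr 1; ext i j; exact hG i i.isLt _

/-- prepend a function -/
def cns (c : ℂ → ℂ) (U : ℕ → ℂ → ℂ) : ℕ → ℂ → ℂ := fun a => match a with
  | 0 => c
  | a + 1 => U a

/-- first `m` from `G`, then `F` -/
def mg (m : ℕ) (G F : ℕ → ℂ → ℂ) : ℕ → ℂ → ℂ := fun a => if a < m then G a else F (a - m)

/-- discrete logarithmic-derivative-type reduction -/
noncomputable def Dd (h : ℂ) (c u : ℂ → ℂ) : ℂ → ℂ := fun y => u (y + h) / c (y + h) - u y / c y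

lemma Wn_reduce (h : ℂ) (p : ℕ) (c : ℂ → ℂ) (U : ℕ → ℂ → ℂ) (x : ℂ)
    (hc : ∀ j < p + 1, c (x + j * h) ≠ 0) :
    Wn h (p + 1) (cns c U) x
      = (∏ j ∈ Finset.range (p + 1), c (x + j * h)) * Wn h p (fun a => Dd h c (U a)) x := by
  set B : Matrix (Fin (p + 1)) (Fin (p + 1)) ℂ :=
    Matrix.of fun i j => cns c U i (x + (j : ℕ) * h) / c (x + (j : ℕ) * h) with hB
  have h1 : Wn h (p + 1) (cns c U) x
      = (∏ j ∈ Finset.range (p + 1), c (x + j * h)) * B.det := by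
    rw [Finset.prod_range fun j : ℕ => c (x + (j:ℕ) * h)]
    rw [← Matrix.det_mul_row (fun j : Fin (p + 1) => c (x + (j : ℕ) * h)) B]
    unfold Wn; congr 1; ext i j
    simp only [hB, Matrix.of_apply]
    rw [mul_div_cancel₀]
    exact hc j (j.isLt)
  rw [h1]
  congr 1
  -- column operations
  set B' : Matrix (Fin (p + 1)) (Fin (p + 1)) ℂ :=
    Matrix.of fun i => Fin.cases (B i 0) (fun j => B i j.succ - B i j.castSucc) with hB'
  have h2 : B.det = B'.det := by
    apply Matrix.det_eq_of_forall_col_eq_smul_add_pred (fun _ => (1 : ℂ))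
    · intro i; simp [hB']
    · intro i j; simp [hB']
  rw [h2]
  have hrow0 : ∀ j : Fin (p + 1), B 0 j = 1 := by
    intro j
    simp only [hB, Matrix.of_apply]
    show c (x + (j : ℕ) * h) / c (x + (j : ℕ) * h) = 1
    exact div_self (hc j j.isLt)
  have h3 : B'.det = (B'.submatrix Fin.succ Fin.succ).det := by
    rw [Matrix.det_succ_row_zero]
    rw [Finset.sum_eq_single 0]
    · simp [hB', hrow0, Fin.zero_succAbove]
    · intro j _ hj
      obtain ⟨j', rfl⟩ := Fin.exists_succ_eq.2 hj
      simp [hB', hrow0]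
    · intro habs; simp at habs
  rw [h3]
  unfold Wn
  congr 1
  ext i j
  simp only [Matrix.submatrix_apply, hB', Matrix.of_apply, Fin.cases_succ, hB]
  show cns c U (i : ℕ).succ (x + ((j.succ : Fin (p+1)) : ℕ) * h) / _ -
      cns c U (i : ℕ).succ (x + ((j.castSucc : Fin (p+1)) : ℕ) * h) / _
      = Dd h c (U i) (x + (j : ℕ) * h)
  have e1 : ((j.succ : Fin (p + 1)) : ℕ) = (j : ℕ) + 1 := rfl
  have e2 : ((j.castSucc : Fin (p + 1)) : ℕ) = (j : ℕ) := rfl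
  simp only [e1, e2, cns, Dd]
  have e3 : x + (((j : ℕ) + 1 : ℕ) : ℂ) * h = x + (j : ℕ) * h + h := by push_cast; ring
  rw [e3]

lemma prod_shift (t : ℕ → ℂ) (m : ℕ) : ∀ k : ℕ,
    (∏ j ∈ Finset.range (k + 1), ∏ r ∈ Finset.range (m + 2), t (j + r))
      = (∏ r ∈ Finset.range (m + k + 2), t r) *
        ∏ j ∈ Finset.range k, ∏ r ∈ Finset.range (m + 1), t (j + 1 + r) := by
  intro k; induction k with
  | zero => simp
  | succ k ih =>
    rw [Finset.prod_range_succ, ih,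
      Finset.prod_range_succ (fun j => ∏ r ∈ Finset.range (m + 1), t (j + 1 + r))]
    have e1 : (∏ r ∈ Finset.range (m + 2), t (k + 1 + r))
        = (∏ r ∈ Finset.range (m + 1), t (k + 1 + r)) * t (m + k + 2) := by
      rw [Finset.prod_range_succ, show k + 1 + (m + 1) = m + k + 2 from by omega]
    have e2 : (∏ r ∈ Finset.range (m + (k + 1) + 2), t r)
        = (∏ r ∈ Finset.range (m + k + 2), t r) * t (m + k + 2) := by
      rw [show m + (k + 1) + 2 = (m + k + 2) + 1 by omega, Finset.prod_range_succ]
    rw [e1, e2]; ring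

lemma key_step (h : ℂ) (k m : ℕ)
    (ih : ∀ (G F : ℕ → ℂ → ℂ) (x : ℂ),
      Wn h (k + 1) (fun i => Wn h (m + 1) (mg m G fun _ => F i)) x
        = Wn h (m + k + 1) (mg m G F) x * ∏ j ∈ Finset.range k, Wn h m G (x + ((j : ℕ) + 1) * h))
    (G F : ℕ → ℂ → ℂ) (x : ℂ)
    (hg : ∀ r < m + k + 2, G 0 (x + r * h) ≠ 0) :
    Wn h (k + 1) (fun i => Wn h (m + 2) (mg (m + 1) G fun _ => F i)) x
      = Wn h (m + k + 2) (mg (m + 1) G F) x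
        * ∏ j ∈ Finset.range k, Wn h (m + 1) G (x + ((j : ℕ) + 1) * h) := by
  set c : ℂ → ℂ := G 0 with hcdef
  set G' : ℕ → ℂ → ℂ := fun a => G (a + 1) with hG'
  set DG : ℕ → ℂ → ℂ := fun a => Dd h c (G' a) with hDG
  set DF : ℕ → ℂ → ℂ := fun b => Dd h c (F b) with hDF
  -- step A : mg (m+1) G X = cns c (mg m G' X)
  have stepA : ∀ X : ℕ → ℂ → ℂ, mg (m + 1) G X = cns c (mg m G' X) := by
    intro X; funext a
    match a with
    | 0 => simp [mg, cns]; rfl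
    | a + 1 =>
      simp only [mg, cns, hG']
      by_cases ha : a < m
      · rw [if_pos (by omega), if_pos ha]
      · rw [if_neg (by omega), if_neg ha, Nat.succ_sub_succ]
  -- step C : Dd distributes over mg
  have stepC : ∀ X : ℕ → ℂ → ℂ,
      (fun a => Dd h c (mg m G' X a)) = mg m DG (fun b => Dd h c (X b)) := by
    intro X; funext a
    by_cases ha : a < m
    · simp [mg, ha, hDG]
    · simp [mg, ha]
  -- step B : entrywise reduction of the inner Wronskians
  have stepB : ∀ (X : ℕ → ℂ → ℂ) (p : ℕ) (y : ℂ), (∀ r < p + 1, c (y + r * h) ≠ 0) →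
      Wn h (p + 1) (cns c X) y
        = (∏ r ∈ Finset.range (p + 1), c (y + r * h)) * Wn h p (fun a => Dd h c (X a)) y :=
    fun X p y hy => Wn_reduce h p c X y hy
  -- entry factorization of the outer determinant
  have hLHS : Wn h (k + 1) (fun i => Wn h (m + 2) (mg (m + 1) G fun _ => F i)) x
      = (∏ j ∈ Finset.range (k + 1), ∏ r ∈ Finset.range (m + 2), c (x + ((j : ℕ) + (r : ℕ)) * h))
        * Wn h (k + 1) (fun i => Wn h (m + 1) (mg m DG fun _ => DF i)) x := by
    have entry : ∀ (i : ℕ) (j : ℕ), j < k + 1 →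
        Wn h (m + 2) (mg (m + 1) G fun _ => F i) (x + (j : ℕ) * h)
          = (∏ r ∈ Finset.range (m + 2), c (x + ((j : ℕ) + (r : ℕ)) * h))
            * Wn h (m + 1) (mg m DG fun _ => DF i) (x + (j : ℕ) * h) := by
      intro i j hj
      rw [stepA, stepB _ (m + 1) _ ?_]
      · congr 1
        · apply Finset.prod_congr rfl
          intro r _
          congr 1; ring_nf
        · rw [stepC]
      · intro r hr
        have e : x + (j : ℕ) * h + (r : ℕ) * h = x + (((j + r : ℕ) : ℕ) : ℂ) * h := by
          push_cast; ring
        rw [e]; exact hg (j + r) (by omega)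
    -- pull column factors out
    unfold Wn
    rw [Finset.prod_range fun j : ℕ =>
      ∏ r ∈ Finset.range (m + 2), c (x + ((j : ℕ) + (r : ℕ)) * h)]
    rw [← Matrix.det_mul_row (fun j : Fin (k + 1) =>
      ∏ r ∈ Finset.range (m + 2), c (x + (((j : ℕ) : ℂ) + (r : ℕ)) * h))]
    congr 1; ext i j
    simp only [Matrix.of_apply]
    exact entry i j j.isLt
  rw [hLHS, ih DG DF x]
  -- now reverse the reductions on the RHS pieces
  have hbig : Wn h (m + k + 2) (mg (m + 1) G F) x
      = (∏ r ∈ Finset.range (m + k + 2), c (x + (r : ℕ) * h))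
        * Wn h (m + k + 1) (mg m DG DF) x := by
    rw [show m + k + 2 = (m + k + 1) + 1 by omega] at *
    rw [stepA, stepB (mg m G' F) (m + k + 1) x ?_]
    · rw [stepC]
    · intro r hr; exact hg r (by omega)
  have hsmall : ∀ j : ℕ, j < k →
      Wn h (m + 1) G (x + ((j : ℕ) + 1) * h)
        = (∏ r ∈ Finset.range (m + 1), c (x + (((j : ℕ) + 1 + (r : ℕ)) : ℂ) * h))
        * Wn h m DG (x + ((j : ℕ) + 1) * h) := by
    intro j hj
    have hGc : G = cns c G' := by
      funext a; match a with
      | 0 => rfl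
      | a + 1 => rfl
    rw [hGc, stepB G' m _ ?_]
    · congr 1
      apply Finset.prod_congr rfl
      intro r _
      congr 1; ring_nf
    · intro r hr
      have e : x + ((j : ℕ) + 1) * h + (r : ℕ) * h = x + (((j + 1 + r : ℕ) : ℕ) : ℂ) * h := by
        push_cast; ring
      rw [e]; exact hg (j + 1 + r) (by omega)
  rw [hbig, Finset.prod_congr rfl (fun j hj => hsmall j (Finset.mem_range.1 hj)),
    Finset.prod_mul_distrib]
  have hps := prod_shift (fun r => c (x + (r : ℕ) * h)) m k
  have e1 : (∏ j ∈ Finset.range (k + 1), ∏ r ∈ Finset.range (m + 2),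
        c (x + (((j : ℕ) : ℂ) + (r : ℕ)) * h))
      = ∏ j ∈ Finset.range (k + 1), ∏ r ∈ Finset.range (m + 2),
        c (x + (((j + r : ℕ) : ℕ) : ℂ) * h) := by
    apply Finset.prod_congr rfl; intro j _
    apply Finset.prod_congr rfl; intro r _
    congr 1; push_cast; ring_nf
  have e2 : (∏ j ∈ Finset.range k, ∏ r ∈ Finset.range (m + 1),
        c (x + (((j : ℕ) + 1 + (r : ℕ)) : ℂ) * h))
      = ∏ j ∈ Finset.range k, ∏ r ∈ Finset.range (m + 1),
        c (x + (((j + 1 + r : ℕ) : ℕ) : ℂ) * h) := by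
    apply Finset.prod_congr rfl; intro j _
    apply Finset.prod_congr rfl; intro r _
    congr 1; push_cast; ring_nf
  rw [e1, e2, hps]; ring

lemma key (h : ℂ) (k : ℕ) : ∀ (m : ℕ) (G F : ℕ → ℂ → ℂ) (x : ℂ),
    Wn h (k + 1) (fun i => Wn h (m + 1) (mg m G fun _ => F i)) x
      = Wn h (m + k + 1) (mg m G F) x
        * ∏ j ∈ Finset.range k, Wn h m G (x + ((j : ℕ) + 1) * h) := by
  intro m; induction m with
  | zero =>
    intro G F x
    have h0 : ∀ y, Wn h 0 G y = 1 := by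
      intro y; unfold Wn; exact Matrix.det_fin_zero
    have h1 : Wn h (k + 1) (fun i => Wn h 1 (mg 0 G fun _ => F i)) x
        = Wn h (k + 1) F x := by
      apply Wn_congr
      intro a _ y
      unfold Wn
      rw [Matrix.det_fin_one]
      simp [mg]
    rw [h1, show 0 + k + 1 = k + 1 from by omega]
    have h2 : Wn h (k + 1) (mg 0 G F) x = Wn h (k + 1) F x := by
      apply Wn_congr; intro a _ y; simp [mg]
    rw [h2]
    simp [h0]
  | succ m ih =>
    intro G F x
    set Gp : ℂ → ℕ → ℂ → ℂ := fun ε a => if a = 0 then (fun y => G 0 y + ε) else G a with hGp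
    set L : ℂ → ℂ := fun ε =>
      Wn h (k + 1) (fun i => Wn h (m + 1 + 1) (mg (m + 1) (Gp ε) fun _ => F i)) x with hL
    set R : ℂ → ℂ := fun ε =>
      Wn h (m + 1 + k + 1) (mg (m + 1) (Gp ε) F) x
        * ∏ j ∈ Finset.range k, Wn h (m + 1) (Gp ε) (x + ((j : ℕ) + 1) * h) with hR
    set S : Set ℂ :=
      ↑((Finset.range (m + k + 2)).image fun r => -G 0 (x + (r : ℕ) * h)) with hS
    have hSc : S.Countable :=
      ((Finset.range (m + k + 2)).image fun r => -G 0 (x + (r : ℕ) * h)).countable_toSet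
    have hent2 : ∀ (a : ℕ) (y : ℂ), Continuous fun ε => Gp ε a y := by
      intro a y
      by_cases h2 : a = 0 <;> simp [hGp, h2] <;> fun_prop
    have hent : ∀ (X : ℕ → ℂ → ℂ) (a : ℕ) (y : ℂ),
        Continuous fun ε => mg (m + 1) (Gp ε) X a y := by
      intro X a y
      by_cases h1 : a < m + 1
      · simpa [mg, h1] using hent2 a y
      · simp only [mg, h1, if_false, if_neg h1]
        exact continuous_const
    have hWn1 : ∀ (X : ℕ → ℂ → ℂ) (n : ℕ) (y : ℂ),
        Continuous fun ε => Wn h n (mg (m + 1) (Gp ε) X) y := by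
      intro X n y
      show Continuous fun ε =>
        Matrix.det (Matrix.of fun a b : Fin n => mg (m + 1) (Gp ε) X a (y + (b : ℕ) * h))
      exact Continuous.matrix_det (continuous_matrix fun a b => hent X a _)
    have hWn2 : ∀ (n : ℕ) (y : ℂ), Continuous fun ε => Wn h n (Gp ε) y := by
      intro n y
      show Continuous fun ε =>
        Matrix.det (Matrix.of fun a b : Fin n => Gp ε a (y + (b : ℕ) * h))
      exact Continuous.matrix_det (continuous_matrix fun a b => hent2 a _)
    have hcontL : Continuous L := by
      rw [hL]
      show Continuous fun ε =>
        Matrix.det (Matrix.of fun i j : Fin (k + 1) =>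
          Wn h (m + 1 + 1) (mg (m + 1) (Gp ε) fun _ => F i) (x + (j : ℕ) * h))
      exact Continuous.matrix_det (continuous_matrix fun i j => hWn1 _ _ _)
    have hcontR : Continuous R := by
      rw [hR]
      exact (hWn1 F _ x).mul
        (continuous_finset_prod _ fun j _ => hWn2 (m + 1) _)
    have hgood : ∀ ε ∉ S, L ε = R ε := by
      intro ε hε
      have hg : ∀ r < m + k + 2, (Gp ε) 0 (x + (r : ℕ) * h) ≠ 0 := by
        intro r hr
        simp only [hGp, if_pos rfl]
        intro h0
        apply hε
        rw [hS]
        simp only [Finset.coe_image, Set.mem_image, Finset.mem_coe, Finset.mem_range]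
        exact ⟨r, hr, by linear_combination -h0⟩
      have hks := key_step h k m ih (Gp ε) F x hg
      simp only [hL, hR]
      rw [show m + 1 + k + 1 = m + k + 2 from by omega]
      exact hks
    have hLR : L = R := Continuous.ext_on (hSc.dense_compl ℂ) hcontL hcontR hgood
    have h00 := congrFun hLR 0
    simp only [hL, hR] at h00
    have hGp0 : ∀ (a : ℕ) (y : ℂ), Gp 0 a y = G a y := by
      intro a y; by_cases h2 : a = 0 <;> simp [hGp, h2]
    have hmg0 : ∀ (X : ℕ → ℂ → ℂ) (b : ℕ) (z : ℂ),
        mg (m + 1) (Gp 0) X b z = mg (m + 1) G X b z := by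
      intro X b z; by_cases hb : b < m + 1 <;> simp [mg, hb, hGp0]
    have t1 : Wn h (k + 1) (fun i => Wn h (m + 1 + 1) (mg (m + 1) (Gp 0) fun _ => F i)) x
        = Wn h (k + 1) (fun i => Wn h (m + 1 + 1) (mg (m + 1) G fun _ => F i)) x :=
      Wn_congr _ _ _ (fun a _ y => Wn_congr _ _ _ (fun b _ z => hmg0 _ b z))
    have t2 : Wn h (m + 1 + k + 1) (mg (m + 1) (Gp 0) F) x
        = Wn h (m + 1 + k + 1) (mg (m + 1) G F) x :=
      Wn_congr _ _ _ (fun b _ z => hmg0 _ b z)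
    have t3 : ∀ j : ℕ, Wn h (m + 1) (Gp 0) (x + ((j : ℕ) + 1) * h)
        = Wn h (m + 1) G (x + ((j : ℕ) + 1) * h) :=
      fun j => Wn_congr _ _ _ (fun b _ z => hGp0 b z)
    rw [t1, t2] at h00
    rw [h00]
    congr 1
    exact Finset.prod_congr rfl fun j _ => t3 j

/-- with `V_{s-k+1}(i) = W(g_1, ..., g_{s-k}, g_i)` for
`s-k+1 ≤ i ≤ s+1`, one has
`W(V(s-k+1), ..., V(s+1))(x) = W(g_1,...,g_{s+1})(x) ∏_{j=1}^k W(g_1,...,g_{s-k})(x+jh)`. -/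
theorem stmt4 (h : ℂ) (s k : ℕ) (hk : k ≤ s) (g : Fin (s + 1) → ℂ → ℂ) (x : ℂ) :
    DW h (fun i : Fin (k + 1) =>
        DW h (Fin.snoc (firstTup s k hk g) (g ⟨s - k + i.1, by omega⟩))) x
      = DW h g x * ∏ j ∈ Finset.range k, DW h (firstTup s k hk g) (x + (j + 1) * h) := by
  set G : ℕ → ℂ → ℂ := fun a => if ha : a < s + 1 then g ⟨a, ha⟩ else 0 with hG
  set F : ℕ → ℂ → ℂ := fun b => G (s - k + b) with hF
  have claim1 : ∀ (i : Fin (k + 1)) (y : ℂ),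
      DW h (Fin.snoc (firstTup s k hk g) (g ⟨s - k + i.1, by omega⟩)) y
        = Wn h (s - k + 1) (mg (s - k) G fun _ => F i.1) y := by
    intro i y
    unfold DW Wn
    congr 1; ext a j
    simp only [Matrix.of_apply]
    by_cases ha : (a : ℕ) < s - k
    · have hsn : (Fin.snoc (firstTup s k hk g) (g ⟨s - k + i.1, by omega⟩)
            : Fin (s - k + 1) → ℂ → ℂ) a
          = firstTup s k hk g ⟨(a : ℕ), ha⟩ := by
        have e : a = Fin.castSucc ⟨(a : ℕ), ha⟩ := by apply Fin.ext; simp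
        calc (Fin.snoc (firstTup s k hk g) (g ⟨s - k + i.1, by omega⟩)
              : Fin (s - k + 1) → ℂ → ℂ) a
            = (Fin.snoc (firstTup s k hk g) (g ⟨s - k + i.1, by omega⟩)
              : Fin (s - k + 1) → ℂ → ℂ) (Fin.castSucc ⟨(a : ℕ), ha⟩) := by rw [← e]
          _ = firstTup s k hk g ⟨(a : ℕ), ha⟩ := Fin.snoc_castSucc _ _ _
      rw [hsn]
      simp only [mg, if_pos ha, hG, firstTup]
      rw [dif_pos (by omega : (a : ℕ) < s + 1)]
      congr 1
    · have haa : a = Fin.last (s - k) := by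
        apply Fin.ext; simp; omega
      rw [haa, Fin.snoc_last]
      simp only [mg, Fin.val_last, hF, hG, lt_irrefl, if_false]
      rw [dif_pos (by omega : s - k + (i : ℕ) < s + 1)]
  have claim2 : DW h (fun i : Fin (k + 1) =>
        DW h (Fin.snoc (firstTup s k hk g) (g ⟨s - k + i.1, by omega⟩))) x
      = Wn h (k + 1) (fun i => Wn h (s - k + 1) (mg (s - k) G fun _ => F i)) x := by
    unfold DW Wn
    congr 1; ext i j
    simp only [Matrix.of_apply]
    exact claim1 i _
  rw [claim2, key h k (s - k) G F x]
  have claim3 : Wn h (s - k + k + 1) (mg (s - k) G F) x = DW h g x := by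
    rw [show s - k + k + 1 = s + 1 from by omega]
    unfold DW Wn
    congr 1; ext a j
    simp only [Matrix.of_apply, mg, hF, hG]
    by_cases ha : (a : ℕ) < s - k
    · rw [if_pos ha, dif_pos (by omega : (a : ℕ) < s + 1)]
    · rw [if_neg ha, dif_pos (by omega : s - k + ((a : ℕ) - (s - k)) < s + 1)]
      congr 1
      apply Fin.ext; simp; omega
  have claim4 : ∀ j : ℕ, Wn h (s - k) G (x + ((j : ℕ) + 1) * h)
      = DW h (firstTup s k hk g) (x + ((j : ℕ) + 1) * h) := by
    intro j
    unfold DW Wn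
    congr 1; ext a b
    simp only [Matrix.of_apply, hG, firstTup]
    rw [dif_pos (by omega : (a : ℕ) < s + 1)]
    congr 1
  rw [claim3]
  congr 1
  exact Finset.prod_congr rfl fun j _ => claim4 j
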